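/- Let θ₁ > 1, θ₂ < 0, α, κ > 0 and λ with r-g < λ < r-g+α/κ. Define Ĝ(q) = (1-θ₂)κ(λ-(r-g)) + (θ₁-1)(κ(λ-(r-g))-α)q^{θ₂-1} + α(θ₁-1) for q ∈ (0,1). Then Ĝ is strictly increasing on (0,1), Ĝ(q) → -∞ as q → 0+, Ĝ(1) = (θ₁-θ₂)κ(λ-(r-g)) > 0, and hence there is a unique q̂(λ) ∈ (0,1) with Ĝ(q̂(λ)) = 0, given explicitly by q̂(λ) = [(α - κ(λ-(r-g)))(θ₁-1) / ((1-θ₂)κ(λ-(r-g)) + α(θ₁-1))]^{1/(1-θ₂)}. -/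

import Mathlib

open Real Set Filter

/-- The function Ĝ from the proof of Corollary 5.4. -/
noncomputable def Ghat (r g lam α κ θ₁ θ₂ q : ℝ) : ℝ :=
  (1 - θ₂) * κ * (lam - (r - g))
    + (θ₁ - 1) * (κ * (lam - (r - g)) - α) * q ^ (θ₂ - 1)
    + α * (θ₁ - 1)

/-- Ĝ is strictly increasing on (0,1), tends to -∞ as q → 0+,
Ĝ(1) = (θ₁-θ₂)κ(λ-(r-g)) > 0, and the explicit
q̂(λ) = [(α-κ(λ-(r-g)))(θ₁-1)/((1-θ₂)κ(λ-(r-g)) + α(θ₁-1))]^{1/(1-θ₂)}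
is the unique zero of Ĝ in (0,1). -/
theorem stmt_18 (r g lam α κ θ₁ θ₂ : ℝ)
    (hα : 0 < α) (hκ : 0 < κ)
    (hlam₁ : r - g < lam) (hlam₂ : lam < r - g + α / κ)
    (hθ₁ : θ₁ > 1) (hθ₂ : θ₂ < 0) :
    StrictMonoOn (Ghat r g lam α κ θ₁ θ₂) (Ioo 0 1) ∧
    Tendsto (Ghat r g lam α κ θ₁ θ₂) (nhdsWithin 0 (Ioi 0)) atBot ∧
    Ghat r g lam α κ θ₁ θ₂ 1 = (θ₁ - θ₂) * κ * (lam - (r - g)) ∧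
    0 < (θ₁ - θ₂) * κ * (lam - (r - g)) ∧
    (((α - κ * (lam - (r - g))) * (θ₁ - 1)
        / ((1 - θ₂) * κ * (lam - (r - g)) + α * (θ₁ - 1))) ^ ((1 : ℝ) / (1 - θ₂))
      ∈ Ioo (0 : ℝ) 1) ∧
    Ghat r g lam α κ θ₁ θ₂
      (((α - κ * (lam - (r - g))) * (θ₁ - 1)
        / ((1 - θ₂) * κ * (lam - (r - g)) + α * (θ₁ - 1))) ^ ((1 : ℝ) / (1 - θ₂))) = 0 ∧
    (∀ q ∈ Ioo (0 : ℝ) 1, Ghat r g lam α κ θ₁ θ₂ q = 0 →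
      q = ((α - κ * (lam - (r - g))) * (θ₁ - 1)
        / ((1 - θ₂) * κ * (lam - (r - g)) + α * (θ₁ - 1))) ^ ((1 : ℝ) / (1 - θ₂))) := by
  have hc0 : 0 < κ * (lam - (r - g)) := mul_pos hκ (by linarith)
  have hcα : κ * (lam - (r - g)) < α := by
    have h1 : lam - (r - g) < α / κ := by linarith
    calc κ * (lam - (r - g)) < κ * (α / κ) := mul_lt_mul_of_pos_left h1 hκ
      _ = α := by field_simp
  have hA : (θ₁ - 1) * (κ * (lam - (r - g)) - α) < 0 :=
    mul_neg_of_pos_of_neg (by linarith) (by linarith)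
  have hD : 0 < (1 - θ₂) * κ * (lam - (r - g)) + α * (θ₁ - 1) := by nlinarith
  have hN : 0 < (α - κ * (lam - (r - g))) * (θ₁ - 1) := by nlinarith
  have he : θ₂ - 1 < 0 := by linarith
  have h1θ₂ : (1 : ℝ) - θ₂ ≠ 0 := by linarith
  set x : ℝ := (α - κ * (lam - (r - g))) * (θ₁ - 1)
      / ((1 - θ₂) * κ * (lam - (r - g)) + α * (θ₁ - 1)) with hxdef
  have hx0 : 0 < x := div_pos hN hD
  have hx1 : x < 1 := by
    rw [hxdef, div_lt_one hD]; nlinarith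
  have hkey : (x ^ ((1:ℝ) / (1 - θ₂))) ^ (θ₂ - 1) = x⁻¹ := by
    rw [← Real.rpow_neg_one x, ← Real.rpow_mul hx0.le]
    congr 1
    field_simp
    ring
  have hmem : x ^ ((1:ℝ) / (1 - θ₂)) ∈ Ioo (0:ℝ) 1 :=
    ⟨Real.rpow_pos_of_pos hx0 _,
     Real.rpow_lt_one hx0.le hx1 (div_pos one_pos (by linarith))⟩
  have hmono : StrictMonoOn (Ghat r g lam α κ θ₁ θ₂) (Ioo 0 1) := by
    intro a ha b hb hab
    have hpow : b ^ (θ₂ - 1) < a ^ (θ₂ - 1) :=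
      Real.rpow_lt_rpow_of_neg ha.1 hab he
    have := mul_lt_mul_of_neg_left hpow hA
    simp only [Ghat]
    nlinarith [this]
  have hval : Ghat r g lam α κ θ₁ θ₂ (x ^ ((1:ℝ) / (1 - θ₂))) = 0 := by
    simp only [Ghat, hkey]; simp only [hxdef, inv_div]
    have hN' : (α - κ * (lam - (r - g))) * (θ₁ - 1) ≠ 0 := ne_of_gt hN
    have hD' : (1 - θ₂) * κ * (lam - (r - g)) + α * (θ₁ - 1) ≠ 0 := ne_of_gt hD
    rw [show (θ₁ - 1) * (κ * (lam - (r - g)) - α) = -((α - κ * (lam - (r - g))) * (θ₁ - 1)) by ring, neg_mul, mul_div_cancel₀ _ hN']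
    ring
  refine ⟨hmono, ?_, ?_, ?_, ⟨hmem.1, hmem.2⟩, hval, ?_⟩
  · -- tendsto atBot
    have h1 : Tendsto (fun q : ℝ => q ^ (θ₂ - 1)) (nhdsWithin 0 (Ioi 0)) atTop := by
      have h2 : Tendsto (fun q : ℝ => (q⁻¹) ^ (1 - θ₂)) (nhdsWithin 0 (Ioi 0)) atTop :=
        (tendsto_rpow_atTop (by linarith : (0:ℝ) < 1 - θ₂)).comp tendsto_inv_nhdsGT_zero
      refine h2.congr' ?_
      filter_upwards [self_mem_nhdsWithin] with q (hq : 0 < q)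
      rw [show θ₂ - 1 = -(1 - θ₂) by ring, Real.rpow_neg hq.le, ← Real.inv_rpow hq.le]
    have h3 : Tendsto (fun q : ℝ => (θ₁ - 1) * (κ * (lam - (r - g)) - α) * q ^ (θ₂ - 1))
        (nhdsWithin 0 (Ioi 0)) atBot := h1.const_mul_atTop_of_neg hA
    have h4 := tendsto_atBot_add_const_left _ ((1 - θ₂) * κ * (lam - (r - g))) h3
    have h5 := tendsto_atBot_add_const_right _ (α * (θ₁ - 1)) h4
    exact h5.congr fun q => by simp [Ghat]
  · simp [Ghat, Real.one_rpow]; ring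
  · nlinarith
  · intro q hq hq0
    exact hmono.injOn hq hmem (hq0.trans hval.symm)
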